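/- Let G be a MIF group. Then for every n ∈ ℕ and every finite family w₁, …, w_m of nontrivial elements of the free product G * F_n, there exists a single tuple (g₁, …, gₙ) ∈ Gⁿ such that w_j(g₁, …, gₙ) ≠ 1 in G for all j = 1, …, m. -/

import Mathlib

/-- `w ∈ G * F_n` is a mixed identity of `G`: every substitution of elements of `G` for the
free generators (via the homomorphism `G * F_n → G` that is the identity on `G`) kills `w`. -/
def SatisfiesMixedIdentity (G : Type*) [Group G] {n : ℕ}
    (w : Monoid.Coprod G (FreeGroup (Fin n))) : Prop :=
  ∀ g : Fin n → G, Monoid.Coprod.lift (MonoidHom.id G) (FreeGroup.lift g) w = 1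

/-- A group is mixed identity free (MIF) if it satisfies no nontrivial mixed identity. -/
def IsMIF (G : Type*) [Group G] : Prop :=
  ∀ (n : ℕ) (w : Monoid.Coprod G (FreeGroup (Fin n))), SatisfiesMixedIdentity G w → w = 1

open Monoid

section Aux

universe u
variable {G : Type u} [Group G]

/-- Evaluation homomorphism. -/
def MifEv (G : Type u) [Group G] {n : ℕ} (g : Fin n → G) :
    Coprod G (FreeGroup (Fin n)) →* G :=
  Coprod.lift (MonoidHom.id G) (FreeGroup.lift g)

/-- Embedding `G * F_n → G * F_{n+1}`. -/
def MifEmb (G : Type u) [Group G] (n : ℕ) :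
    Coprod G (FreeGroup (Fin n)) →* Coprod G (FreeGroup (Fin (n + 1))) :=
  Coprod.map (MonoidHom.id G) (FreeGroup.lift fun i => FreeGroup.of i.castSucc)

/-- The extra generator. -/
def MifT (G : Type u) [Group G] (n : ℕ) : Coprod G (FreeGroup (Fin (n + 1))) :=
  Coprod.inr (FreeGroup.of (Fin.last n))

theorem mifEmb_injective (n : ℕ) : Function.Injective (MifEmb G n) := by
  set r : Coprod G (FreeGroup (Fin (n + 1))) →* Coprod G (FreeGroup (Fin n)) :=
    Coprod.map (MonoidHom.id G) (FreeGroup.lift (Fin.lastCases 1 FreeGroup.of)) with hr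
  have hcomp : r.comp (MifEmb G n) = MonoidHom.id _ := by
    apply Coprod.hom_ext
    · rfl
    · ext i
      simp [hr, MifEmb]
  intro a b h
  have h2 := congrArg r h
  rw [← MonoidHom.comp_apply, ← MonoidHom.comp_apply, hcomp] at h2
  simpa using h2

theorem mifEv_emb {n : ℕ} (g : Fin (n + 1) → G) (a : Coprod G (FreeGroup (Fin n))) :
    MifEv G g (MifEmb G n a) = MifEv G (fun i => g i.castSucc) a := by
  have : (MifEv G g).comp (MifEmb G n) = MifEv G (fun i => g i.castSucc) := by
    apply Coprod.hom_ext
    · rfl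
    · ext i
      simp [MifEv, MifEmb]
  exact DFunLike.congr_fun this a

theorem mifEv_t {n : ℕ} (g : Fin (n + 1) → G) : MifEv G g (MifT G n) = g (Fin.last n) := by
  simp [MifEv, MifT]

theorem neword_prod_ne_one {ι : Type*} [DecidableEq ι] {M : ι → Type*} [∀ i, Monoid (M i)]
    {i j : ι} (w : CoprodI.NeWord M i j) : w.prod ≠ 1 := by
  classical
  intro h
  have hinj : Function.Injective (CoprodI.Word.prod (M := M)) :=
    (CoprodI.Word.equiv (M := M)).symm.injective
  have h2 : w.toWord = CoprodI.Word.empty := hinj (by rw [CoprodI.Word.prod_empty]; exact h)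
  have := w.toList_ne_nil
  rw [show w.toList = w.toWord.toList from rfl, h2] at this
  exact this rfl

end Aux

section Key

universe u
variable {G : Type u} [Group G]

theorem mif_combine_ne_one {n : ℕ} {a b : Coprod G (FreeGroup (Fin n))}
    (ha : a ≠ 1) (hb : b ≠ 1) :
    MifEmb G n a * MifT G n * MifEmb G n b * (MifT G n)⁻¹ * (MifEmb G n a)⁻¹ * MifT G n *
      (MifEmb G n b)⁻¹ * (MifT G n)⁻¹ ≠ 1 := by
  classical
  have hK : True := trivial
  let K := Coprod G (FreeGroup (Fin n))
  let M : Bool → Type u := fun c => cond c K (FreeGroup K)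
  letI : ∀ c, Group (M c) := fun c =>
    Bool.rec (motive := fun c => Group (M c)) (inferInstance : Group (FreeGroup K)) (inferInstance : Group K) c
  let ofT : K →* CoprodI M := CoprodI.of (M := M) (i := true)
  let τ : FreeGroup K := FreeGroup.of 1
  have hτ : τ ≠ 1 := fun hc => by simpa [τ] using congrArg FreeGroup.toWord hc
  let Ψ : Coprod G (FreeGroup (Fin (n + 1))) →* CoprodI M :=
    Coprod.lift (ofT.comp Coprod.inl)
      (FreeGroup.lift (Fin.lastCases (CoprodI.of (M := M) (i := false) τ)
        (fun i => ofT (Coprod.inr (FreeGroup.of i)))))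
  have hΨe : ∀ x : K, Ψ (MifEmb G n x) = ofT x := by
    have : Ψ.comp (MifEmb G n) = ofT := by
      apply Coprod.hom_ext
      · rfl
      · ext i
        simp [Ψ, MifEmb]
    exact fun x => DFunLike.congr_fun this x
  have hΨt : Ψ (MifT G n) = CoprodI.of (M := M) (i := false) τ := by
    simp [Ψ, MifT]
  intro h
  have h' := congrArg Ψ h
  rw [map_one] at h'
  simp only [map_mul, map_inv, hΨe, hΨt] at h'
  -- build the NeWord
  have htf : (true : Bool) ≠ false := by decide
  have hft : (false : Bool) ≠ true := by decide
  let w : CoprodI.NeWord M true false :=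
    .append (.append (.append (.append (.append (.append (.append
      (.singleton (M := M) (i := true) a ha) htf (.singleton (M := M) (i := false) τ hτ)) hft
      (.singleton (M := M) (i := true) b hb)) htf (.singleton (M := M) (i := false) τ⁻¹ (inv_ne_one.2 hτ))) hft
      (.singleton (M := M) (i := true) a⁻¹ (inv_ne_one.2 ha))) htf (.singleton (M := M) (i := false) τ hτ)) hft
      (.singleton (M := M) (i := true) b⁻¹ (inv_ne_one.2 hb))) htf
      (.singleton (M := M) (i := false) τ⁻¹ (inv_ne_one.2 hτ))
  have hw : w.prod = 1 := by
    simp only [w, CoprodI.NeWord.append_prod, CoprodI.NeWord.prod_singleton, map_inv]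
    exact h'
  exact neword_prod_ne_one w hw

theorem mif_key (hmif : IsMIF G) :
    ∀ (m n : ℕ) (w : Fin m → Coprod G (FreeGroup (Fin n))), (∀ j, w j ≠ 1) →
      ∃ g : Fin n → G, ∀ j, MifEv G g (w j) ≠ 1 := by
  intro m
  induction m with
  | zero => exact fun n w _ => ⟨fun _ => 1, fun j => j.elim0⟩
  | succ m ih =>
    cases m with
    | zero =>
      intro n w hw
      obtain ⟨g, hg⟩ := not_forall.mp (fun hs => hw 0 (hmif n (w 0) hs))
      exact ⟨g, fun j => by rw [Fin.fin_one_eq_zero j]; exact hg⟩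
    | succ m =>
      intro n w hw
      set v := MifEmb G n (w 0) * MifT G n * MifEmb G n (w 1) * (MifT G n)⁻¹ *
        (MifEmb G n (w 0))⁻¹ * MifT G n * (MifEmb G n (w 1))⁻¹ * (MifT G n)⁻¹ with hv
      set w' : Fin (m + 1) → Coprod G (FreeGroup (Fin (n + 1))) :=
        Fin.cons v (fun j : Fin m => MifEmb G n (w j.succ.succ)) with hw'def
      have hw' : ∀ j, w' j ≠ 1 := by
        intro j
        refine Fin.cases ?_ (fun k => ?_) j
        · simpa [hw'def] using mif_combine_ne_one (hw 0) (hw 1)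
        · simp only [hw'def, Fin.cons_succ]
          intro h
          exact hw k.succ.succ (mifEmb_injective n (by simpa using h))
      obtain ⟨g', hg'⟩ := ih (n + 1) w' hw'
      refine ⟨fun i => g' i.castSucc, fun j => ?_⟩
      have h0 := hg' 0
      rw [show w' 0 = v from rfl, hv] at h0
      simp only [map_mul, map_inv, mifEv_emb, mifEv_t] at h0
      set A := MifEv G (fun i => g' i.castSucc) (w 0) with hA
      set B := MifEv G (fun i => g' i.castSucc) (w 1) with hB
      set t := g' (Fin.last n) with ht
      have hAne : A ≠ 1 := by
        intro hA1
        apply h0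
        rw [hA1]
        group
      have hBne : B ≠ 1 := by
        intro hB1
        apply h0
        rw [hB1]
        group
      refine Fin.cases hAne (fun k => ?_) j
      refine Fin.cases hBne (fun k' => ?_) k
      have := hg' k'.succ
      rw [show w' k'.succ = MifEmb G n (w k'.succ.succ) from by simp [hw'def]] at this
      rwa [mifEv_emb] at this

end Key

theorem mif_simultaneous (G : Type*) [Group G] (hmif : IsMIF G) (n m : ℕ)
    (w : Fin m → Monoid.Coprod G (FreeGroup (Fin n))) (hw : ∀ j, w j ≠ 1) :
    ∃ g : Fin n → G, ∀ j,
      Monoid.Coprod.lift (MonoidHom.id G) (FreeGroup.lift g) (w j) ≠ 1 := by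
  exact mif_key hmif m n w hw
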